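/- arXiv:2008.13075 — 6 statements merged into one kernel-verified Lean document; each statement's English description precedes it below -/
import Mathlib

section
/- If {v0, v1, v2} is an obtuse superbase in ℝ² (v0 = -v1-v2, all pairwise inner products nonpositive) ordered so that ‖v1‖ ≤ ‖v2‖ ≤ ‖v0‖, then {v1, v2} is a Minkowski-reduced basis, i.e., 2|v1·v2| ≤ ‖v1‖². -/
theorem minkowski_of_obtuse_superbase_dim2
    (v0 v1 v2 : EuclideanSpace ℝ (Fin 2))
    (hsum : v0 + v1 + v2 = 0) (hne : v1 ≠ 0)
    (h01 : (inner ℝ v0 v1 : ℝ) ≤ 0) (h02 : (inner ℝ v0 v2 : ℝ) ≤ 0)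
    (h12 : (inner ℝ v1 v2 : ℝ) ≤ 0)
    (hord1 : ‖v1‖ ≤ ‖v2‖) (hord2 : ‖v2‖ ≤ ‖v0‖) :
    2 * |(inner ℝ v1 v2 : ℝ)| ≤ ‖v1‖ ^ 2 := by
  have hv0 : v0 = -(v1 + v2) := by
    have h : v0 + (v1 + v2) = 0 := by rw [← add_assoc]; exact hsum
    exact eq_neg_of_add_eq_zero_left h
  have hn0 : ‖v0‖ = ‖v1 + v2‖ := by rw [hv0, norm_neg]
  have hexp : ‖v1 + v2‖ ^ 2 = ‖v1‖ ^ 2 + 2 * (inner ℝ v1 v2 : ℝ) + ‖v2‖ ^ 2 :=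
    norm_add_sq_real v1 v2
  have hsq : ‖v2‖ ^ 2 ≤ ‖v0‖ ^ 2 := by
    exact pow_le_pow_left₀ (norm_nonneg _) hord2 2
  rw [abs_of_nonpos h12]
  rw [hn0] at hsq; linarith [hsq, hexp]
end

section
/- For a two-dimensional lattice with Minkowski-reduced basis {(1,0),(a,b)} where -1/2 ≤ a ≤ 0, b > 0, and a² + b² ≥ 1, the error probability P_e = (-a - a²)/(4b²) satisfies 0 ≤ P_e ≤ 1/12. Moreover P_e = 0 iff a = 0, and P_e = 1/12 iff (a,b) = (-1/2, √3/2). -/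
theorem error_probability_bounds_dim2
    (a b : ℝ) (ha1 : -(1/2 : ℝ) ≤ a) (ha2 : a ≤ 0) (hb : 0 < b)
    (hmink : 1 ≤ a ^ 2 + b ^ 2) :
    0 ≤ (-a - a ^ 2) / (4 * b ^ 2) ∧
    (-a - a ^ 2) / (4 * b ^ 2) ≤ 1 / 12 ∧
    ((-a - a ^ 2) / (4 * b ^ 2) = 0 ↔ a = 0) ∧
    ((-a - a ^ 2) / (4 * b ^ 2) = 1 / 12 ↔ a = -(1/2 : ℝ) ∧ b = Real.sqrt 3 / 2) := by
  have hb2 : (0:ℝ) < 4 * b ^ 2 := by positivity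
  have hnum : 0 ≤ -a - a ^ 2 := by nlinarith
  have hs3 : Real.sqrt 3 ^ 2 = 3 := Real.sq_sqrt (by norm_num)
  have hs3pos : 0 < Real.sqrt 3 := Real.sqrt_pos.mpr (by norm_num)
  refine ⟨div_nonneg hnum hb2.le, ?_, ?_, ?_⟩
  · rw [div_le_div_iff₀ hb2 (by norm_num)]
    nlinarith
  · rw [div_eq_zero_iff]
    constructor
    · rintro (h | h)
      · nlinarith
      · nlinarith
    · rintro rfl; left; ring
  · constructor
    · intro h
      rw [div_eq_div_iff hb2.ne' (by norm_num)] at h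
      have ha : a = -(1/2 : ℝ) := by nlinarith
      subst ha
      have hbsq : b ^ 2 = 3 / 4 := by nlinarith
      have hfac : (b - Real.sqrt 3 / 2) * (b + Real.sqrt 3 / 2) = 0 := by nlinarith
      rcases mul_eq_zero.mp hfac with h1 | h1
      · exact ⟨rfl, by linarith⟩
      · nlinarith
    · rintro ⟨rfl, rfl⟩
      rw [div_eq_div_iff (by positivity) (by norm_num : (12:ℝ) ≠ 0)]
      nlinarith
end

section
/- The lattice A_n with generator matrix V = I_n + (c_n/n)·J_n, where c_n = -1 + √(n+1) and J_n is the all-ones n×n matrix, has QR decomposition whose upper-triangular factor has diagonal entries r_kk = √((k+1)/k) for k = 1, ..., n. -/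
noncomputable def rEnt (k j : ℕ) : ℝ :=
  if k = j then Real.sqrt (((k:ℝ)+2)/((k:ℝ)+1))
  else if k < j then 1 / Real.sqrt (((k:ℝ)+1)*((k:ℝ)+2)) else 0

lemma telescope (m : ℕ) :
    ∑ k ∈ Finset.range m, (1:ℝ)/(((k:ℝ)+1)*((k:ℝ)+2)) = (m:ℝ)/((m:ℝ)+1) := by
  induction m with
  | zero => simp
  | succ m ih =>
      rw [Finset.sum_range_succ, ih]
      push_cast
      have h1 : (m:ℝ) + 1 ≠ 0 := by positivity
      have h2 : (m:ℝ) + 2 ≠ 0 := by positivity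
      field_simp
      ring

lemma key (i j m : ℕ) (hij : i ≤ j) (hj : j < m) :
    ∑ k ∈ Finset.range m, rEnt k i * rEnt k j = (if i = j then 1 else 0) + 1 := by
  have hi1 : (0:ℝ) < (i:ℝ) + 1 := by positivity
  have hsub : Finset.range (i+1) ⊆ Finset.range m := by
    apply Finset.range_subset_range.mpr; omega
  rw [← Finset.sum_subset hsub (fun k _ hk => ?_)]
  · rw [Finset.sum_range_succ]
    have hsum : ∑ k ∈ Finset.range i, rEnt k i * rEnt k j
        = ∑ k ∈ Finset.range i, (1:ℝ)/(((k:ℝ)+1)*((k:ℝ)+2)) := by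
      apply Finset.sum_congr rfl
      intro k hk
      have hki : k < i := Finset.mem_range.mp hk
      have hkj : k < j := lt_of_lt_of_le hki hij
      have hpos : (0:ℝ) < ((k:ℝ)+1)*((k:ℝ)+2) := by positivity
      rw [rEnt, rEnt, if_neg (by omega), if_pos hki, if_neg (by omega), if_pos hkj]
      rw [div_mul_div_comm, one_mul, Real.mul_self_sqrt hpos.le]
    rw [hsum, telescope]
    rcases eq_or_lt_of_le hij with h | h
    · subst h
      rw [if_pos rfl, rEnt, if_pos rfl]
      rw [Real.mul_self_sqrt (by positivity)]
      field_simp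
      ring
    · rw [if_neg (by omega), rEnt, rEnt, if_pos rfl, if_neg (by omega), if_pos h]
      have hb : (0:ℝ) < (i:ℝ) + 2 := by positivity
      rw [mul_one_div, ← Real.sqrt_div (by positivity)]
      have heq : (((i:ℝ)+2)/((i:ℝ)+1))/(((i:ℝ)+1)*((i:ℝ)+2)) = (1/((i:ℝ)+1))^2 := by
        field_simp
      rw [heq, Real.sqrt_sq (by positivity)]
      field_simp
      norm_num
  · have hik : i < k := by
      simp only [Finset.mem_range] at hk; omega
    rw [rEnt, if_neg (by omega), if_neg (by omega), zero_mul]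

theorem qr_diagonal_of_An
    (n : ℕ) (hn : 0 < n)
    (V : Matrix (Fin n) (Fin n) ℝ)
    (hV : V = 1 + ((-1 + Real.sqrt (n + 1)) / n) • (Matrix.of fun _ _ => (1 : ℝ))) :
    ∃ Q R : Matrix (Fin n) (Fin n) ℝ,
      Q * Q.transpose = 1 ∧
      R.BlockTriangular id ∧
      (∀ k, 0 < R k k) ∧
      V = Q * R ∧
      ∀ k : Fin n, R k k = Real.sqrt (((k : ℝ) + 2) / ((k : ℝ) + 1)) := by
  set a : ℝ := (-1 + Real.sqrt (n + 1)) / n with ha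
  set R : Matrix (Fin n) (Fin n) ℝ := Matrix.of fun k j => rEnt (k:ℕ) (j:ℕ) with hR
  -- basic facts about R
  have hdiag : ∀ k : Fin n, R k k = Real.sqrt (((k:ℝ) + 2) / ((k:ℝ) + 1)) := by
    intro k
    simp [hR, rEnt]
  have hpos : ∀ k : Fin n, 0 < R k k := by
    intro k
    rw [hdiag k]
    apply Real.sqrt_pos.mpr
    positivity
  have htri : R.BlockTriangular id := by
    intro i j hij
    simp only [id] at hij
    have : (j:ℕ) < (i:ℕ) := hij
    simp only [hR, Matrix.of_apply, rEnt, if_neg (by omega : ¬ (i:ℕ) = (j:ℕ)),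
      if_neg (by omega : ¬ (i:ℕ) < (j:ℕ))]
  -- determinant is a unit
  have hdet : IsUnit R.det := by
    rw [Matrix.det_of_upperTriangular htri]
    apply IsUnit.mk0
    apply Finset.prod_ne_zero_iff.mpr
    intro k _
    exact (hpos k).ne'
  -- Gram matrix computation: Vᵀ V = 1 + J = Rᵀ R
  have hcoef : 2*a + (n:ℝ)*a^2 = 1 := by
    have hs : Real.sqrt ((n:ℝ) + 1) ^ 2 = (n:ℝ) + 1 := Real.sq_sqrt (by positivity)
    have hn' : (n:ℝ) ≠ 0 := Nat.cast_ne_zero.mpr hn.ne'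
    rw [ha]
    field_simp
    nlinarith [hs]
  have hVij : ∀ i j : Fin n, V i j = (if i = j then (1:ℝ) else 0) + a := by
    intro i j
    rw [hV]
    simp [Matrix.add_apply, Matrix.smul_apply, Matrix.one_apply, smul_eq_mul]
  have hgramV : ∀ i j : Fin n, (V.transpose * V) i j = (if i = j then (1:ℝ) else 0) + 1 := by
    intro i j
    rw [Matrix.mul_apply]
    simp only [Matrix.transpose_apply]
    have hterm : ∀ k : Fin n, V k i * V k j
        = (if k = i then (1:ℝ) else 0) * (if k = j then (1:ℝ) else 0)
          + a * (if k = i then (1:ℝ) else 0) + a * (if k = j then (1:ℝ) else 0) + a*a := by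
      intro k; rw [hVij k i, hVij k j]; ring
    rw [Finset.sum_congr rfl (fun k _ => hterm k)]
    rw [Finset.sum_add_distrib, Finset.sum_add_distrib, Finset.sum_add_distrib]
    rw [← Finset.mul_sum, ← Finset.mul_sum]
    have h1 : ∑ k : Fin n, (if k = i then (1:ℝ) else 0) = 1 := by simp
    have h2 : ∑ k : Fin n, (if k = j then (1:ℝ) else 0) = 1 := by simp
    have h3 : ∑ k : Fin n, (if k = i then (1:ℝ) else 0) * (if k = j then (1:ℝ) else 0)
        = if i = j then (1:ℝ) else 0 := by
      by_cases hij : i = j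
      · subst hij; simp
      · simp only [if_neg hij]
        apply Finset.sum_eq_zero
        intro x _
        by_cases hx : x = i
        · subst hx; simp [hij]
        · simp [hx]
    rw [h1, h2, h3]
    have h4 : ∑ _k : Fin n, a*a = (n:ℝ)*a^2 := by
      rw [Finset.sum_const, Finset.card_univ, Fintype.card_fin, nsmul_eq_mul]; ring
    rw [h4]
    linarith [hcoef]
  have hgramR : ∀ i j : Fin n, (R.transpose * R) i j = (if i = j then (1:ℝ) else 0) + 1 := by
    intro i j
    rw [Matrix.mul_apply]
    simp only [Matrix.transpose_apply, hR, Matrix.of_apply]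
    have hsum : ∑ k : Fin n, rEnt (k:ℕ) (i:ℕ) * rEnt (k:ℕ) (j:ℕ)
        = ∑ k ∈ Finset.range n, rEnt k (i:ℕ) * rEnt k (j:ℕ) := by
      rw [Finset.sum_range fun k => rEnt k (i:ℕ) * rEnt k (j:ℕ)]
    rw [hsum]
    rcases le_total (i:ℕ) (j:ℕ) with h | h
    · rw [key _ _ n h j.isLt]
      congr 1
      simp [Fin.ext_iff]
    · have hcomm : ∀ k, rEnt k (i:ℕ) * rEnt k (j:ℕ) = rEnt k (j:ℕ) * rEnt k (i:ℕ) := by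
        intro k; ring
      rw [Finset.sum_congr rfl (fun k _ => hcomm k), key _ _ n h i.isLt]
      congr 1
      simp [Fin.ext_iff, eq_comm]
  have hgram : V.transpose * V = R.transpose * R := by
    ext i j
    rw [hgramV i j, hgramR i j]
  -- define Q
  refine ⟨V * R⁻¹, R, ?_, htri, hpos, ?_, hdiag⟩
  · -- orthogonality
    have h1 : R⁻¹ * R = 1 := Matrix.nonsing_inv_mul R hdet
    have h2 : R * R⁻¹ = 1 := Matrix.mul_nonsing_inv R hdet
    rw [mul_eq_one_comm]
    calc (V * R⁻¹).transpose * (V * R⁻¹)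
        = R⁻¹.transpose * (V.transpose * V) * R⁻¹ := by
          rw [Matrix.transpose_mul]; noncomm_ring
      _ = R⁻¹.transpose * (R.transpose * R) * R⁻¹ := by rw [hgram]
      _ = (R * R⁻¹).transpose * (R * R⁻¹) := by
          rw [Matrix.transpose_mul]; noncomm_ring
      _ = 1 := by rw [h2]; simp
  · rw [Matrix.mul_assoc, Matrix.nonsing_inv_mul R hdet, Matrix.mul_one]
end

section
/- For all n ≥ 1, (1/12)(n + H_n) < r²(n), where H_n is the n-th harmonic number and r²(n) = (1/2)·(2⌊(n+1)/2⌋(n+1-⌊(n+1)/2⌋))/(n+1) is the squared covering radius of the lattice A_n. -/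
lemma harm_le (n : ℕ) (hn : 1 ≤ n) :
    ∑ i ∈ Finset.range n, 1 / ((i : ℝ) + 1) ≤ ((n : ℝ) + 1) / 2 := by
  induction n with
  | zero => omega
  | succ m ih =>
    rcases Nat.eq_zero_or_pos m with hm | hm
    · subst hm; norm_num
    · rw [Finset.sum_range_succ]
      have h1 : 1 / ((m : ℝ) + 1) ≤ 1 / 2 := by
        apply div_le_div_of_nonneg_left <;> [norm_num; norm_num; exact_mod_cast by omega]
      have := ih hm
      push_cast
      linarith

theorem chebyshev_condition_fails_for_An (n : ℕ) (hn : 1 ≤ n) :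
    (1 / 12 : ℝ) * ((n : ℝ) + ∑ i ∈ Finset.range n, 1 / ((i : ℝ) + 1))
      < (1 / 2 : ℝ) *
          (2 * ((((n + 1) / 2 : ℕ) : ℝ)) * ((n : ℝ) + 1 - (((n + 1) / 2 : ℕ) : ℝ)))
          / ((n : ℝ) + 1) := by
  have hn1 : (0:ℝ) < (n:ℝ) + 1 := by positivity
  have hnR : (1:ℝ) ≤ (n:ℝ) := by exact_mod_cast hn
  have hH := harm_le n hn
  have hprod : (n:ℝ) * ((n:ℝ) + 2)
      ≤ 4 * ((((n + 1) / 2 : ℕ) : ℝ)) * ((n : ℝ) + 1 - (((n + 1) / 2 : ℕ) : ℝ)) := by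
    rcases Nat.even_or_odd n with ⟨m, hm⟩ | ⟨m, hm⟩
    · subst hm
      have hk : (m + m + 1) / 2 = m := by omega
      rw [hk]; push_cast; nlinarith
    · subst hm
      have hk : (2 * m + 1 + 1) / 2 = m + 1 := by omega
      rw [hk]; push_cast; nlinarith
  rw [lt_div_iff₀ hn1]
  nlinarith [mul_le_mul_of_nonneg_right hH hn1.le]
end

section
/- The Voronoi cell of the 2D lattice with Minkowski-reduced basis {(1,0),(a,b)}, -1/2 ≤ a ≤ 0 < b, a²+b² ≥ 1, is a hexagon with vertices ±(1/2, (a²+b²+a)/(2b)), ±(-1/2, (a²+b²+a)/(2b)), ±((2a+1)/2, (b²-a²-a)/(2b)), and its area equals b. -/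
open MeasureTheory
set_option maxHeartbeats 1000000


private lemma intSq (i : ℤ) (h : 0 ≤ i) : (i:ℝ) ≤ (i:ℝ)^2 := by
  rcases h.eq_or_lt with h'|h'
  · simp [← h']
  · have h1 : (1:ℝ) ≤ (i:ℝ) := by exact_mod_cast h'
    nlinarith

private lemma comb (p0 p1 q0 q1 x0 x1 l0 l1 : ℝ) (i j : ℤ) (hi : 0 ≤ i) (hj : 0 ≤ j)
    (hl0 : l0 = (i:ℝ)*p0 + (j:ℝ)*q0) (hl1 : l1 = (i:ℝ)*p1 + (j:ℝ)*q1)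
    (hp : 2*(x0*p0+x1*p1) ≤ p0^2+p1^2) (hq : 2*(x0*q0+x1*q1) ≤ q0^2+q1^2)
    (hpq : 0 ≤ p0*q0+p1*q1) :
    2*(x0*l0+x1*l1) ≤ l0^2+l1^2 := by
  subst hl0 hl1
  have hi' : (0:ℝ) ≤ (i:ℝ) := by exact_mod_cast hi
  have hj' : (0:ℝ) ≤ (j:ℝ) := by exact_mod_cast hj
  have hi2 := intSq i hi
  have hj2 := intSq j hj
  nlinarith [mul_nonneg hi' (sub_nonneg.mpr hp), mul_nonneg hj' (sub_nonneg.mpr hq),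
    mul_nonneg (sub_nonneg.mpr hi2) (by positivity : (0:ℝ) ≤ p0^2+p1^2),
    mul_nonneg (sub_nonneg.mpr hj2) (by positivity : (0:ℝ) ≤ q0^2+q1^2),
    mul_nonneg (mul_nonneg hi' hj') hpq]

private lemma vor_char (a b : ℝ) (ha1 : -(1/2 : ℝ) ≤ a) (ha2 : a ≤ 0) (hb : 0 < b)
    (hmink : 1 ≤ a ^ 2 + b ^ 2) (x0 x1 : ℝ) :
    (∀ m k : ℤ, 2*(x0*((m:ℝ)+(k:ℝ)*a) + x1*((k:ℝ)*b)) ≤ ((m:ℝ)+(k:ℝ)*a)^2 + ((k:ℝ)*b)^2)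
      ↔ (|x0| ≤ 1/2 ∧ |a*x0+b*x1| ≤ (a^2+b^2)/2 ∧ |(1+a)*x0+b*x1| ≤ ((1+a)^2+b^2)/2) := by
  constructor
  · intro h
    have h10 := h 1 0; have h10' := h (-1) 0
    have h01 := h 0 1; have h01' := h 0 (-1)
    have h11 := h 1 1; have h11' := h (-1) (-1)
    push_cast at h10 h10' h01 h01' h11 h11'
    refine ⟨abs_le.mpr ⟨by nlinarith, by nlinarith⟩,
      abs_le.mpr ⟨by nlinarith, by nlinarith⟩,
      abs_le.mpr ⟨by nlinarith, by nlinarith⟩⟩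
  · rintro ⟨h1, h2, h3⟩ m k
    obtain ⟨h1l, h1u⟩ := abs_le.mp h1
    obtain ⟨h2l, h2u⟩ := abs_le.mp h2
    obtain ⟨h3l, h3u⟩ := abs_le.mp h3
    have cu : 2*(x0*1+x1*0) ≤ 1^2+0^2 := by nlinarith
    have cu' : 2*(x0*(-1)+x1*0) ≤ (-1)^2+0^2 := by nlinarith
    have cv : 2*(x0*a+x1*b) ≤ a^2+b^2 := by nlinarith
    have cv' : 2*(x0*(-a)+x1*(-b)) ≤ (-a)^2+(-b)^2 := by nlinarith
    have cw : 2*(x0*(1+a)+x1*b) ≤ (1+a)^2+b^2 := by nlinarith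
    have cw' : 2*(x0*(-(1+a))+x1*(-b)) ≤ (-(1+a))^2+(-b)^2 := by nlinarith
    rcases le_or_gt 0 k with hk | hk
    · rcases le_or_gt k m with hm | hm
      · exact comb 1 0 (1+a) b x0 x1 _ _ (m-k) k (by omega) hk
          (by push_cast; ring) (by push_cast; ring) cu cw (by nlinarith)
      · rcases le_or_gt 0 m with hm0 | hm0
        · exact comb (1+a) b a b x0 x1 _ _ m (k-m) hm0 (by omega)
            (by push_cast; ring) (by push_cast; ring) cw cv (by nlinarith)
        · exact comb (-1) 0 a b x0 x1 _ _ (-m) k (by omega) hk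
            (by push_cast; ring) (by push_cast; ring) cu' cv (by nlinarith)
    · rcases le_or_gt m k with hm | hm
      · exact comb (-1) 0 (-(1+a)) (-b) x0 x1 _ _ (k-m) (-k) (by omega) (by omega)
          (by push_cast; ring) (by push_cast; ring) cu' cw' (by nlinarith)
      · rcases le_or_gt m 0 with hm0 | hm0
        · exact comb (-(1+a)) (-b) (-a) (-b) x0 x1 _ _ (-m) (m-k) (by omega) (by omega)
            (by push_cast; ring) (by push_cast; ring) cw' cv' (by nlinarith)
        · exact comb 1 0 (-a) (-b) x0 x1 _ _ m (-k) (by omega) (by omega)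
            (by push_cast; ring) (by push_cast; ring) cu cv' (by nlinarith)

private lemma norm_iff (x l : EuclideanSpace ℝ (Fin 2)) :
    ‖x‖ ≤ ‖x - l‖ ↔ 2*(x 0 * l 0 + x 1 * l 1) ≤ (l 0)^2 + (l 1)^2 := by
  rw [← pow_le_pow_iff_left₀ (norm_nonneg x) (norm_nonneg (x - l)) two_ne_zero]
  rw [EuclideanSpace.norm_eq, EuclideanSpace.norm_eq]
  rw [Real.sq_sqrt (by positivity), Real.sq_sqrt (by positivity)]
  simp only [Fin.sum_univ_two, Real.norm_eq_abs, sq_abs, PiLp.sub_apply]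
  constructor <;> intro h <;> nlinarith [h]



private lemma support_le (a b c d x0 x1 : ℝ) (ha1 : -(1/2 : ℝ) ≤ a) (ha2 : a ≤ 0)
    (hb : 0 < b) (hmink : 1 ≤ a ^ 2 + b ^ 2) (hd : 0 ≤ d)
    (h1 : |x0| ≤ 1/2) (h2 : |a*x0+b*x1| ≤ (a^2+b^2)/2)
    (h3 : |(1+a)*x0+b*x1| ≤ ((1+a)^2+b^2)/2) :
    c*x0+d*x1 ≤ c*(1/2)+d*((a^2+b^2+a)/(2*b)) ∨
    c*x0+d*x1 ≤ c*(-(1/2))+d*((a^2+b^2+a)/(2*b)) ∨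
    c*x0+d*x1 ≤ c*((2*a+1)/2)+d*((b^2-a^2-a)/(2*b)) := by
  obtain ⟨h1l, h1u⟩ := abs_le.mp h1
  obtain ⟨h2l, h2u⟩ := abs_le.mp h2
  obtain ⟨h3l, h3u⟩ := abs_le.mp h3
  have hs1 : b*(c*(1/2)+d*((a^2+b^2+a)/(2*b))) = b*c/2 + d*(a^2+b^2+a)/2 := by
    field_simp
  have hs2 : b*(c*(-(1/2))+d*((a^2+b^2+a)/(2*b))) = -(b*c)/2 + d*(a^2+b^2+a)/2 := by
    field_simp
  have ht : b*(c*((2*a+1)/2)+d*((b^2-a^2-a)/(2*b))) = b*c*(2*a+1)/2 + d*(b^2-a^2-a)/2 := by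
    field_simp
  rcases le_or_gt (d*(1+a)) (c*b) with hc1 | hc1
  · left
    have key : b*(c*x0+d*x1) ≤ b*(c*(1/2)+d*((a^2+b^2+a)/(2*b))) := by
      rw [hs1]
      linarith [mul_nonneg (sub_nonneg.mpr hc1) (by linarith : (0:ℝ) ≤ 1/2 - x0),
        mul_nonneg hd (by linarith : (0:ℝ) ≤ ((1+a)^2+b^2)/2 - ((1+a)*x0+b*x1))]
    exact le_of_mul_le_mul_left key hb
  · rcases le_or_gt (d*a) (c*b) with hc2 | hc2
    · right; right
      have key : b*(c*x0+d*x1) ≤ b*(c*((2*a+1)/2)+d*((b^2-a^2-a)/(2*b))) := by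
        rw [ht]
        linarith [mul_nonneg (sub_nonneg.mpr hc2) (by linarith : (0:ℝ) ≤ ((1+a)^2+b^2)/2 - ((1+a)*x0+b*x1)),
          mul_nonneg (by linarith : (0:ℝ) ≤ d*(1+a) - c*b) (by linarith : (0:ℝ) ≤ (a^2+b^2)/2 - (a*x0+b*x1))]
      exact le_of_mul_le_mul_left key hb
    · right; left
      have key : b*(c*x0+d*x1) ≤ b*(c*(-(1/2))+d*((a^2+b^2+a)/(2*b))) := by
        rw [hs2]
        linarith [mul_nonneg hd (by linarith : (0:ℝ) ≤ (a^2+b^2)/2 - (a*x0+b*x1)),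
          mul_nonneg (by linarith : (0:ℝ) ≤ d*a - c*b) (by linarith : (0:ℝ) ≤ 1/2 + x0)]
      exact le_of_mul_le_mul_left key hb


private lemma lin_int (c e p q : ℝ) :
    ∫ x in p..q, (c - e*x) = (q - p)*c - e*((q^2-p^2)/2) := by
  have h1 : IntervalIntegrable (fun x : ℝ => e * x) volume p q :=
    (continuous_const.mul continuous_id).intervalIntegrable p q
  rw [intervalIntegral.integral_sub intervalIntegrable_const h1]
  rw [intervalIntegral.integral_const_mul]
  simp only [integral_id, intervalIntegral.integral_const, smul_eq_mul]
  try ring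

private lemma vol_S (a b : ℝ) (ha1 : -(1/2 : ℝ) ≤ a) (ha2 : a ≤ 0) (hb : 0 < b)
    (hmink : 1 ≤ a ^ 2 + b ^ 2) :
    volume {p : ℝ × ℝ | |p.1| ≤ 1/2 ∧ |a*p.1+b*p.2| ≤ (a^2+b^2)/2 ∧
      |(1+a)*p.1+b*p.2| ≤ ((1+a)^2+b^2)/2} = ENNReal.ofReal b := by
  set r2 : ℝ := (a^2+b^2)/2 with hr2
  set r3 : ℝ := ((1+a)^2+b^2)/2 with hr3
  set G : ℝ → ℝ := fun x => min ((r2 - a*x)/b) ((r3 - (1+a)*x)/b) with hG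
  set F : ℝ → ℝ := fun x => max ((-r2 - a*x)/b) ((-r3 - (1+a)*x)/b) with hF
  set S : Set (ℝ × ℝ) := {p : ℝ × ℝ | |p.1| ≤ 1/2 ∧ |a*p.1+b*p.2| ≤ r2 ∧
      |(1+a)*p.1+b*p.2| ≤ r3} with hSdef
  have hS : MeasurableSet S := by
    have : S = {p : ℝ × ℝ | |p.1| ≤ 1/2} ∩ ({p : ℝ × ℝ | |a*p.1+b*p.2| ≤ r2} ∩
        {p : ℝ × ℝ | |(1+a)*p.1+b*p.2| ≤ r3}) := by
      ext p; simp [hSdef, Set.mem_setOf_eq, and_assoc]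
    rw [this]
    refine ((isClosed_le continuous_fst.abs continuous_const).measurableSet).inter
      (((isClosed_le ((continuous_const.mul continuous_fst).add
          (continuous_const.mul continuous_snd)).abs continuous_const).measurableSet).inter
        ((isClosed_le ((continuous_const.mul continuous_fst).add
          (continuous_const.mul continuous_snd)).abs continuous_const).measurableSet))
  have hslice : ∀ x : ℝ, volume (Prod.mk x ⁻¹' S) =
      Set.indicator (Set.Icc (-(1/2):ℝ) (1/2)) (fun x => ENNReal.ofReal (G x - F x)) x := by
    intro x
    by_cases hx : |x| ≤ 1/2
    · have hmem : x ∈ Set.Icc (-(1/2):ℝ) (1/2) := by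
        rw [Set.mem_Icc]; exact abs_le.mp hx
      rw [Set.indicator_of_mem hmem]
      have : Prod.mk x ⁻¹' S = Set.Icc (F x) (G x) := by
        ext y
        simp only [Set.mem_preimage, hSdef, Set.mem_setOf_eq, Set.mem_Icc, hF, hG,
          max_le_iff, le_min_iff, abs_le]
        constructor
        · rintro ⟨-, ⟨h2l, h2u⟩, ⟨h3l, h3u⟩⟩
          refine ⟨⟨?_, ?_⟩, ?_, ?_⟩
          · rw [div_le_iff₀ hb]; linarith
          · rw [div_le_iff₀ hb]; linarith
          · rw [le_div_iff₀ hb]; linarith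
          · rw [le_div_iff₀ hb]; linarith
        · rintro ⟨⟨h2l, h3l⟩, h2u, h3u⟩
          rw [div_le_iff₀ hb] at h2l h3l
          rw [le_div_iff₀ hb] at h2u h3u
          exact ⟨abs_le.mp hx, ⟨by linarith, by linarith⟩, ⟨by linarith, by linarith⟩⟩
      rw [this, Real.volume_Icc]
    · rw [Set.indicator_of_notMem (by rw [Set.mem_Icc]; exact fun h => hx (abs_le.mpr h))]
      have : Prod.mk x ⁻¹' S = ∅ := by
        ext y; simp only [Set.mem_preimage, hSdef, Set.mem_setOf_eq, Set.mem_empty_iff_false,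
          iff_false]
        rintro ⟨h, -, -⟩; exact hx h
      rw [this]; simp
  have hGc : Continuous G := Continuous.min
    ((continuous_const.sub (continuous_const.mul continuous_id)).div_const b)
    ((continuous_const.sub (continuous_const.mul continuous_id)).div_const b)
  have hFc : Continuous F := Continuous.max
    ((continuous_const.sub (continuous_const.mul continuous_id)).div_const b)
    ((continuous_const.sub (continuous_const.mul continuous_id)).div_const b)
  have hr2' : (1:ℝ)/2 ≤ r2 := by rw [hr2]; linarith
  have hr3' : (0:ℝ) ≤ r3 := by rw [hr3]; positivity
  have hFG : ∀ x, F x ≤ G x → True := fun _ _ => trivial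
  rw [Measure.volume_eq_prod, Measure.prod_apply hS, lintegral_congr hslice,
    lintegral_indicator measurableSet_Icc]
  have hint : IntegrableOn (fun x => G x - F x) (Set.Icc (-(1/2):ℝ) (1/2)) volume :=
    (hGc.sub hFc).integrableOn_Icc
  have hnn : 0 ≤ᵐ[volume.restrict (Set.Icc (-(1/2):ℝ) (1/2))] fun x => G x - F x := by
    filter_upwards [ae_restrict_mem measurableSet_Icc] with x hx
    obtain ⟨hx1, hx2⟩ := Set.mem_Icc.mp hx
    have hFGx : F x ≤ G x := by
      refine max_le (le_min ?_ ?_) (le_min ?_ ?_) <;>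
        rw [div_le_div_iff_of_pos_right hb] <;> rw [hr2, hr3] at * <;> nlinarith
    simp only [Pi.zero_apply]
    linarith
  rw [← ofReal_integral_eq_lintegral_ofReal hint hnn]
  have hIcc : ∫ x in Set.Icc (-(1/2):ℝ) (1/2), (G x - F x) =
      ∫ x in (-(1/2):ℝ)..(1/2), (G x - F x) := by
    rw [integral_Icc_eq_integral_Ioc, ← intervalIntegral.integral_of_le (by norm_num)]
  have hFnegG : ∀ x, F x = -G (-x) := by
    intro x
    simp only [hG, hF]
    rw [show (r2 - a * -x)/b = -((-r2 - a*x)/b) by ring,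
      show (r3 - (1+a) * -x)/b = -((-r3 - (1+a)*x)/b) by ring, min_neg_neg, neg_neg]
  have hsub : ∫ x in (-(1/2):ℝ)..(1/2), (G x - F x) =
      (∫ x in (-(1/2):ℝ)..(1/2), G x) - ∫ x in (-(1/2):ℝ)..(1/2), F x :=
    intervalIntegral.integral_sub (hGc.intervalIntegrable _ _) (hFc.intervalIntegrable _ _)
  have hFint : ∫ x in (-(1/2):ℝ)..(1/2), F x = - ∫ x in (-(1/2):ℝ)..(1/2), G x := by
    rw [intervalIntegral.integral_congr (g := fun x => -G (-x)) (fun x _ => hFnegG x),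
      intervalIntegral.integral_neg, intervalIntegral.integral_comp_neg G]
    norm_num
  set mm : ℝ := a + 1/2 with hmm
  have hm1 : -(1/2:ℝ) ≤ mm := by rw [hmm]; linarith
  have hm2 : mm ≤ (1/2:ℝ) := by rw [hmm]; linarith
  have hGsplit : (∫ x in (-(1/2):ℝ)..mm, G x) + ∫ x in mm..(1/2:ℝ), G x =
      ∫ x in (-(1/2):ℝ)..(1/2), G x :=
    intervalIntegral.integral_add_adjacent_intervals
      (hGc.intervalIntegrable _ _) (hGc.intervalIntegrable _ _)
  have hI1 : ∫ x in (-(1/2):ℝ)..mm, G x =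
      ((mm - (-(1/2)))*r2 - a*((mm^2 - (-(1/2:ℝ))^2)/2))/b := by
    rw [intervalIntegral.integral_congr (g := fun x => (r2 - a*x)/b)]
    · rw [intervalIntegral.integral_div, lin_int]
    · intro x hx
      rw [Set.uIcc_of_le hm1, Set.mem_Icc] at hx
      simp only [hG]
      refine min_eq_left ?_
      have hx2 := hx.2; rw [hmm] at hx2
      rw [div_le_div_iff_of_pos_right hb, hr2, hr3]
      nlinarith [hx2]
  have hI2 : ∫ x in mm..(1/2:ℝ), G x =
      (((1/2:ℝ) - mm)*r3 - (1+a)*(((1/2:ℝ)^2 - mm^2)/2))/b := by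
    rw [intervalIntegral.integral_congr (g := fun x => (r3 - (1+a)*x)/b)]
    · rw [intervalIntegral.integral_div, lin_int]
    · intro x hx
      rw [Set.uIcc_of_le hm2, Set.mem_Icc] at hx
      simp only [hG]
      refine min_eq_right ?_
      have hx1 := hx.1; rw [hmm] at hx1
      rw [div_le_div_iff_of_pos_right hb, hr2, hr3]
      nlinarith [hx1]
  rw [hIcc, hsub, hFint, ← hGsplit, hI1, hI2]
  congr 1
  rw [hmm, hr2, hr3]
  field_simp
  ring


theorem voronoi_cell_hexagon_dim2
    (a b : ℝ) (ha1 : -(1/2 : ℝ) ≤ a) (ha2 : a ≤ 0) (hb : 0 < b)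
    (hmink : 1 ≤ a ^ 2 + b ^ 2) :
    let pt : ℝ → ℝ → EuclideanSpace ℝ (Fin 2) :=
      fun x y => (WithLp.equiv 2 (Fin 2 → ℝ)).symm ![x, y]
    let Λ : Set (EuclideanSpace ℝ (Fin 2)) :=
      {x | ∃ m k : ℤ, x 0 = (m : ℝ) + (k : ℝ) * a ∧ x 1 = (k : ℝ) * b}
    let Vor : Set (EuclideanSpace ℝ (Fin 2)) := {x | ∀ l ∈ Λ, ‖x‖ ≤ ‖x - l‖}
    let s : ℝ := (a ^ 2 + b ^ 2 + a) / (2 * b)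
    let t : ℝ := (b ^ 2 - a ^ 2 - a) / (2 * b)
    Vor = convexHull ℝ
        {pt (1/2) s, pt (-(1/2)) (-s), pt (-(1/2)) s, pt (1/2) (-s),
          pt ((2 * a + 1) / 2) t, pt (-((2 * a + 1) / 2)) (-t)} ∧
      volume Vor = ENNReal.ofReal b := by
  intro pt Λ Vor s t
  have hpt0 : ∀ c d : ℝ, pt c d 0 = c := fun c d => rfl
  have hpt1 : ∀ c d : ℝ, pt c d 1 = d := fun c d => rfl
  have hsdef : s = (a ^ 2 + b ^ 2 + a) / (2 * b) := rfl
  have htdef : t = (b ^ 2 - a ^ 2 - a) / (2 * b) := rfl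
  have hbs : b * s = (a^2+b^2+a)/2 := by rw [hsdef]; field_simp
  have hbt : b * t = (b^2-a^2-a)/2 := by rw [htdef]; field_simp
  -- characterization of membership in Vor
  have hchar : ∀ x : EuclideanSpace ℝ (Fin 2), x ∈ Vor ↔
      (|x 0| ≤ 1/2 ∧ |a*(x 0)+b*(x 1)| ≤ (a^2+b^2)/2 ∧
        |(1+a)*(x 0)+b*(x 1)| ≤ ((1+a)^2+b^2)/2) := by
    intro x
    rw [← vor_char a b ha1 ha2 hb hmink (x 0) (x 1)]
    constructor
    · intro h m k
      have hl : pt ((m:ℝ)+(k:ℝ)*a) ((k:ℝ)*b) ∈ Λ := ⟨m, k, hpt0 _ _, hpt1 _ _⟩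
      have h2 := h _ hl
      rw [norm_iff] at h2
      rwa [hpt0, hpt1] at h2
    · intro h l hl
      obtain ⟨m, k, h0, h1⟩ := hl
      rw [norm_iff, h0, h1]
      exact h m k
  -- convexity of Vor
  have hVorConv : Convex ℝ Vor := by
    intro x hx y hy α β hα hβ hαβ l hl
    have hx2 := hx l hl
    have hy2 := hy l hl
    rw [norm_iff] at hx2 hy2 ⊢
    have e0 : (α • x + β • y) 0 = α * x 0 + β * y 0 := rfl
    have e1 : (α • x + β • y) 1 = α * x 1 + β * y 1 := rfl
    rw [e0, e1]
    have hβ1 : β = 1 - α := by linarith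
    subst hβ1
    nlinarith [mul_le_mul_of_nonneg_left hx2 hα,
      mul_le_mul_of_nonneg_left hy2 (by linarith : (0:ℝ) ≤ 1 - α)]
  -- the six vertices belong to Vor
  have hvertex : ∀ v0 v1 : ℝ, |v0| ≤ 1/2 → |a*v0+b*v1| ≤ (a^2+b^2)/2 →
      |(1+a)*v0+b*v1| ≤ ((1+a)^2+b^2)/2 → pt v0 v1 ∈ Vor := by
    intro v0 v1 h1 h2 h3
    rw [hchar, hpt0, hpt1]
    exact ⟨h1, h2, h3⟩
  have hneg : ∀ v0 v1 : ℝ, pt v0 v1 ∈ Vor → pt (-v0) (-v1) ∈ Vor := by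
    intro v0 v1 h
    rw [hchar, hpt0, hpt1] at h ⊢
    obtain ⟨h1, h2, h3⟩ := h
    refine ⟨by rwa [abs_neg], ?_, ?_⟩
    · rwa [show a*(-v0)+b*(-v1) = -(a*v0+b*v1) by ring, abs_neg]
    · rwa [show (1+a)*(-v0)+b*(-v1) = -((1+a)*v0+b*v1) by ring, abs_neg]
  have hA : pt (1/2) s ∈ Vor := by
    refine hvertex _ _ (by rw [abs_le]; constructor <;> norm_num) ?_ ?_
    · rw [abs_le]; constructor <;> nlinarith [hbs]
    · rw [abs_le]; constructor <;> nlinarith [hbs]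
  have hB : pt (-(1/2)) s ∈ Vor := by
    refine hvertex _ _ (by rw [abs_le]; constructor <;> norm_num) ?_ ?_
    · rw [abs_le]; constructor <;> nlinarith [hbs]
    · rw [abs_le]; constructor <;> nlinarith [hbs]
  have hC : pt ((2*a+1)/2) t ∈ Vor := by
    refine hvertex _ _ (by rw [abs_le]; constructor <;> nlinarith) ?_ ?_
    · rw [abs_le]; constructor <;> nlinarith [hbt]
    · rw [abs_le]; constructor <;> nlinarith [hbt]
  have hA' : pt (-(1/2)) (-s) ∈ Vor := hneg _ _ hA
  have hB' : pt (1/2) (-s) ∈ Vor := by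
    have := hneg _ _ hB; rwa [neg_neg] at this
  have hC' : pt (-((2*a+1)/2)) (-t) ∈ Vor := hneg _ _ hC
  set VS : Set (EuclideanSpace ℝ (Fin 2)) :=
    {pt (1/2) s, pt (-(1/2)) (-s), pt (-(1/2)) s, pt (1/2) (-s),
      pt ((2 * a + 1) / 2) t, pt (-((2 * a + 1) / 2)) (-t)} with hVS
  have hhull : Vor = convexHull ℝ VS := by
    apply Set.Subset.antisymm
    · -- hard direction via Hahn-Banach
      intro x hx
      obtain ⟨h1, h2, h3⟩ := (hchar x).mp hx
      by_contra hnot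
      obtain ⟨f, u, hfu, hux⟩ := geometric_hahn_banach_closed_point
        (convex_convexHull ℝ VS) ((Set.toFinite VS).isClosed_convexHull (𝕜 := ℝ)) hnot
      set c := f (pt 1 0) with hc
      set d := f (pt 0 1) with hd
      have hfy : ∀ y : EuclideanSpace ℝ (Fin 2), f y = c * y 0 + d * y 1 := by
        intro y
        have hy : y = y 0 • pt 1 0 + y 1 • pt 0 1 := by
          ext i
          fin_cases i
          · show y 0 = y 0 * pt 1 0 0 + y 1 * pt 0 1 0
            rw [hpt0, hpt0]; ring
          · show y 1 = y 0 * pt 1 0 1 + y 1 * pt 0 1 1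
            rw [hpt1, hpt1]; ring
        conv_lhs => rw [hy]
        rw [map_add, _root_.map_smul, _root_.map_smul, smul_eq_mul, smul_eq_mul, ← hc, ← hd]
        ring
      have hcontra : ∀ v0 v1 : ℝ, pt v0 v1 ∈ VS →
          c * x 0 + d * x 1 ≤ c*v0+d*v1 → False := by
        intro v0 v1 hvmem hineq
        have h5 := hfu _ (subset_convexHull ℝ VS hvmem)
        rw [hfy, hpt0, hpt1] at h5
        rw [hfy] at hux
        linarith
      rcases le_or_gt 0 d with hd0 | hd0
      · rcases support_le a b c d (x 0) (x 1) ha1 ha2 hb hmink hd0 h1 h2 h3 with h | h | h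
        · exact hcontra (1/2) s (by rw [hVS]; left; rfl) (by rwa [hsdef])
        · exact hcontra (-(1/2)) s (by rw [hVS]; right; right; left; rfl) (by rwa [hsdef])
        · exact hcontra ((2*a+1)/2) t (by rw [hVS]; right; right; right; right; left; rfl)
            (by rwa [htdef])
      · have h1' : |(-(x 0))| ≤ 1/2 := by rwa [abs_neg]
        have h2' : |a*(-(x 0))+b*(-(x 1))| ≤ (a^2+b^2)/2 := by
          rwa [show a*(-(x 0))+b*(-(x 1)) = -(a*(x 0)+b*(x 1)) by ring, abs_neg]
        have h3' : |(1+a)*(-(x 0))+b*(-(x 1))| ≤ ((1+a)^2+b^2)/2 := by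
          rwa [show (1+a)*(-(x 0))+b*(-(x 1)) = -((1+a)*(x 0)+b*(x 1)) by ring, abs_neg]
        rcases support_le a b (-c) (-d) (-(x 0)) (-(x 1)) ha1 ha2 hb hmink
          (by linarith) h1' h2' h3' with h | h | h
        · refine hcontra (-(1/2)) (-s) (by rw [hVS]; right; left; rfl) ?_
          rw [hsdef]; nlinarith [h]
        · refine hcontra (1/2) (-s) (by rw [hVS]; right; right; right; left; rfl) ?_
          rw [hsdef]; nlinarith [h]
        · refine hcontra (-((2*a+1)/2)) (-t)
            (by rw [hVS]; right; right; right; right; right; rfl) ?_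
          rw [htdef]; nlinarith [h]
    · -- easy direction
      refine convexHull_min ?_ hVorConv
      intro v hv
      rw [hVS] at hv
      rcases hv with h | h | h | h | h | h <;> rw [h]
      exacts [hA, hA', hB, hB', hC, hC']
  refine ⟨hhull, ?_⟩
  -- volume computation
  have hpres : MeasurePreserving
      ((MeasurableEquiv.finTwoArrow : (Fin 2 → ℝ) ≃ᵐ ℝ × ℝ) ∘
        (MeasurableEquiv.toLp 2 (Fin 2 → ℝ)).symm) volume volume :=
    (volume_preserving_finTwoArrow ℝ).comp
      (EuclideanSpace.volume_preserving_symm_measurableEquiv_toLp (Fin 2))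
  set SS : Set (ℝ × ℝ) := {p : ℝ × ℝ | |p.1| ≤ 1/2 ∧ |a*p.1+b*p.2| ≤ (a^2+b^2)/2 ∧
      |(1+a)*p.1+b*p.2| ≤ ((1+a)^2+b^2)/2} with hSS
  have hSSmeas : MeasurableSet SS := by
    rw [hSS]
    have : {p : ℝ × ℝ | |p.1| ≤ 1/2 ∧ |a*p.1+b*p.2| ≤ (a^2+b^2)/2 ∧
        |(1+a)*p.1+b*p.2| ≤ ((1+a)^2+b^2)/2} = {p : ℝ × ℝ | |p.1| ≤ 1/2} ∩
        ({p : ℝ × ℝ | |a*p.1+b*p.2| ≤ (a^2+b^2)/2} ∩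
         {p : ℝ × ℝ | |(1+a)*p.1+b*p.2| ≤ ((1+a)^2+b^2)/2}) := by
      ext p; simp [Set.mem_setOf_eq, and_assoc]
    rw [this]
    refine ((isClosed_le continuous_fst.abs continuous_const).measurableSet).inter
      (((isClosed_le ((continuous_const.mul continuous_fst).add
          (continuous_const.mul continuous_snd)).abs continuous_const).measurableSet).inter
        ((isClosed_le ((continuous_const.mul continuous_fst).add
          (continuous_const.mul continuous_snd)).abs continuous_const).measurableSet))
  have hVorPre : Vor = ((MeasurableEquiv.finTwoArrow : (Fin 2 → ℝ) ≃ᵐ ℝ × ℝ) ∘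
      (MeasurableEquiv.toLp 2 (Fin 2 → ℝ)).symm) ⁻¹' SS := by
    ext x
    rw [hchar]
    have : ((MeasurableEquiv.finTwoArrow : (Fin 2 → ℝ) ≃ᵐ ℝ × ℝ) ∘
        (MeasurableEquiv.toLp 2 (Fin 2 → ℝ)).symm) x = (x 0, x 1) := rfl
    rw [Set.mem_preimage, this, hSS]
    rfl
  rw [hVorPre, hpres.measure_preimage hSSmeas.nullMeasurableSet]
  exact vol_S a b ha1 ha2 hb hmink
end

section
/- For a lattice in ℝ³ parameterized by β ∈ [0, π/6] with basis {(1,0,0),(0,1,0),(-sin β, 0, cos β)}, the packing density is π/(6 cos β), ranging from π/6 at β = 0 to π/(3√3) at β = π/6, and the minimum distance of the lattice is 1. -/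
-- Key real inequality: the squared norm of a nonzero lattice vector is at least 1.
lemma prism_key (s c : ℝ) (hs0 : 0 ≤ s) (hs : s ≤ 1/2) (hsc : s^2 + c^2 = 1)
    (u1 u2 u3 : ℤ) (hne : ¬(u1 = 0 ∧ u2 = 0 ∧ u3 = 0)) :
    1 ≤ ((u1 : ℝ) + (u3 : ℝ) * (-s))^2 + (u2 : ℝ)^2 + ((u3 : ℝ) * c)^2 := by
  by_cases h2 : u2 = 0
  · subst h2
    by_cases h3 : u3 = 0
    · subst h3
      have h1 : u1 ≠ 0 := by tauto
      have : (1 : ℝ) ≤ |(u1 : ℝ)| := by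
        rw [← Int.cast_abs]; exact_mod_cast Int.one_le_abs h1
      have : (1:ℝ) ≤ (u1:ℝ)^2 := by nlinarith [abs_nonneg (u1:ℝ), sq_abs (u1:ℝ)]
      push_cast
      nlinarith
    · -- u3 ≠ 0
      have h3abs : (1 : ℝ) ≤ |(u3 : ℝ)| := by
        rw [← Int.cast_abs]; exact_mod_cast Int.one_le_abs h3
      have h3sq : (1:ℝ) ≤ (u3:ℝ)^2 := by nlinarith [sq_abs (u3:ℝ), abs_nonneg (u3:ℝ)]
      by_cases h1 : u1 = 0
      · subst h1
        push_cast
        nlinarith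
      · have h1abs : (1 : ℝ) ≤ |(u1 : ℝ)| := by
          rw [← Int.cast_abs]; exact_mod_cast Int.one_le_abs h1
        have h1sq : (1:ℝ) ≤ (u1:ℝ)^2 := by nlinarith [sq_abs (u1:ℝ), abs_nonneg (u1:ℝ)]
        have hexp : ((u1 : ℝ) + (u3 : ℝ) * (-s))^2 + (0:ℤ) ^2 + ((u3 : ℝ) * c)^2
            = (u1:ℝ)^2 + (u3:ℝ)^2 - 2 * ((u1:ℝ)*(u3:ℝ)) * s := by
          push_cast; nlinarith [hsc]
        push_cast at hexp ⊢
        rw [hexp]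
        by_cases hp : (0:ℝ) ≤ (u1:ℝ) * (u3:ℝ)
        · have hp1 : (1:ℝ) ≤ (u1:ℝ) * (u3:ℝ) := by
            have : u1 * u3 ≠ 0 := mul_ne_zero h1 h3
            have h := Int.one_le_abs this
            have : (1:ℝ) ≤ |(u1:ℝ) * (u3:ℝ)| := by
              rw [← Int.cast_mul, ← Int.cast_abs]; exact_mod_cast h
            rwa [abs_of_nonneg hp] at this
          nlinarith [sq_nonneg ((u1:ℝ) - (u3:ℝ))]
        · nlinarith [mul_nonneg (neg_nonneg.mpr (le_of_not_ge hp)) hs0]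
  · have h2abs : (1 : ℝ) ≤ |(u2 : ℝ)| := by
      rw [← Int.cast_abs]; exact_mod_cast Int.one_le_abs h2
    have h2sq : (1:ℝ) ≤ (u2:ℝ)^2 := by nlinarith [sq_abs (u2:ℝ), abs_nonneg (u2:ℝ)]
    nlinarith [sq_nonneg ((u1:ℝ) + (u3:ℝ)*(-s)), sq_nonneg ((u3:ℝ)*c)]

theorem packing_density_prism_family
    (β : ℝ) (hβ1 : 0 ≤ β) (hβ2 : β ≤ Real.pi / 6) :
    let Λ : Set (EuclideanSpace ℝ (Fin 3)) :=
      {x | ∃ u1 u2 u3 : ℤ,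
        x 0 = (u1 : ℝ) + (u3 : ℝ) * (-Real.sin β) ∧
        x 1 = (u2 : ℝ) ∧
        x 2 = (u3 : ℝ) * Real.cos β}
    -- the minimum distance of the lattice is 1
    ((∀ x ∈ Λ, x ≠ 0 → 1 ≤ ‖x‖) ∧ (∃ x ∈ Λ, x ≠ 0 ∧ ‖x‖ = 1)) ∧
    -- the packing density (π/6)·d_min³/vol equals π/(6 cos β)
    (Real.pi / 6) * (1 : ℝ) ^ 3 / Real.cos β = Real.pi / (6 * Real.cos β) ∧
    -- ranging from π/6 at β = 0 to π/(3√3) at β = π/6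
    Real.pi / (6 * Real.cos 0) = Real.pi / 6 ∧
    Real.pi / (6 * Real.cos (Real.pi / 6)) = Real.pi / (3 * Real.sqrt 3) := by
  intro Λ
  have hs0 : 0 ≤ Real.sin β := Real.sin_nonneg_of_nonneg_of_le_pi hβ1
    (hβ2.trans (by nlinarith [Real.pi_pos]))
  have hs : Real.sin β ≤ 1/2 := by
    have := Real.sin_le_sin_of_le_of_le_pi_div_two (x := β) (y := Real.pi/6)
      (by nlinarith [Real.pi_pos]) (by nlinarith [Real.pi_pos]) hβ2
    rwa [Real.sin_pi_div_six] at this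
  have hsc : Real.sin β ^ 2 + Real.cos β ^ 2 = 1 := Real.sin_sq_add_cos_sq β
  refine ⟨⟨?_, ?_⟩, ?_, ?_, ?_⟩
  · rintro x ⟨u1, u2, u3, hx0, hx1, hx2⟩ hxne
    have hne : ¬(u1 = 0 ∧ u2 = 0 ∧ u3 = 0) := by
      rintro ⟨rfl, rfl, rfl⟩
      apply hxne
      ext i
      fin_cases i <;> simp_all
    have key := prism_key (Real.sin β) (Real.cos β) hs0 hs hsc u1 u2 u3 hne
    rw [EuclideanSpace.norm_eq]
    rw [show (1:ℝ) = Real.sqrt 1 from (Real.sqrt_one).symm]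
    apply Real.sqrt_le_sqrt
    rw [Fin.sum_univ_three]
    simp only [Real.norm_eq_abs, sq_abs, hx0, hx1, hx2]
    exact key
  · refine ⟨(EuclideanSpace.single 0 1 : EuclideanSpace ℝ (Fin 3)), ⟨1, 0, 0, ?_, ?_, ?_⟩, ?_, ?_⟩
    · simp [EuclideanSpace.single_apply]
    · simp [EuclideanSpace.single_apply]
    · simp [EuclideanSpace.single_apply]
    · intro h
      have := congrArg (fun v => v 0) h
      simp [EuclideanSpace.single_apply] at this
    · simp [EuclideanSpace.norm_single]
  · have hc : Real.cos β ≠ 0 := by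
      have : Real.cos β ^ 2 ≥ 3/4 := by nlinarith
      intro h; rw [h] at this; norm_num at this
    field_simp
  · rw [Real.cos_zero]; norm_num
  · rw [Real.cos_pi_div_six]
    rw [div_eq_div_iff (by positivity) (by positivity)]
    have h3 : Real.sqrt 3 * Real.sqrt 3 = 3 := Real.mul_self_sqrt (by norm_num)
    ring_nf
end
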